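/- Let k ≥ 2 and let {t_n} be the 2k-nacci sequence. Then ν_2(t_n) = 0 if n ≡ 1, 2, ..., or 2k (mod 2k+1). -/

import Mathlib

theorem twoknacci_val_zero (k : ℕ) (hk : 2 ≤ k) (t : ℕ → ℕ)
    (h0 : t 0 = 0)
    (h1 : ∀ n, 1 ≤ n → n ≤ 2 * k - 1 → t n = 1)
    (hrec : ∀ n, 2 * k ≤ n → t n = ∑ i ∈ Finset.Icc 1 (2 * k), t (n - i)) :
    ∀ n : ℕ, n % (2 * k + 1) ≠ 0 → padicValNat 2 (t n) = 0 := by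
  have key : ∀ n, t n % 2 = if n % (2 * k + 1) = 0 then 0 else 1 := by
    intro n
    induction n using Nat.strong_induction_on with
    | _ n ih =>
      rcases Nat.lt_or_ge n (2 * k) with hn | hn
      · rcases Nat.eq_zero_or_pos n with h | h
        · subst h; simp [h0]
        · rw [h1 n h (by omega), Nat.mod_eq_of_lt (show n < 2 * k + 1 by omega),
            if_neg (by omega)]
      · rw [hrec n hn, Finset.sum_nat_mod]
        have hrw : ∀ i ∈ Finset.Icc 1 (2 * k),
            t (n - i) % 2 = if n % (2 * k + 1) = i then 0 else 1 := by
          intro i hi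
          simp only [Finset.mem_Icc] at hi
          rw [ih (n - i) (by omega)]
          have him : i % (2 * k + 1) = i := Nat.mod_eq_of_lt (by omega)
          have hiff : (n - i) % (2 * k + 1) = 0 ↔ n % (2 * k + 1) = i := by
            constructor
            · intro h
              have hd : (2 * k + 1) ∣ (n - i) := Nat.dvd_of_mod_eq_zero h
              have h2 := (Nat.modEq_iff_dvd' (show i ≤ n by omega)).mpr hd
              unfold Nat.ModEq at h2
              rw [him] at h2
              exact h2.symm
            · intro h
              have h2 : i ≡ n [MOD 2 * k + 1] := by
                unfold Nat.ModEq; rw [him, h]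
              have hd := (Nat.modEq_iff_dvd' (show i ≤ n by omega)).mp h2
              exact Nat.mod_eq_zero_of_dvd hd
          simp [hiff]
        rw [Finset.sum_congr rfl hrw]
        by_cases h : n % (2 * k + 1) = 0
        · rw [if_pos h]
          have hall : ∀ i ∈ Finset.Icc 1 (2 * k),
              (if n % (2 * k + 1) = i then (0:ℕ) else 1) = 1 := by
            intro i hi
            simp only [Finset.mem_Icc] at hi
            rw [if_neg (by omega)]
          rw [Finset.sum_congr rfl hall, Finset.sum_const, smul_eq_mul, mul_one, Nat.card_Icc]
          omega
        · rw [if_neg h]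
          have hr : n % (2 * k + 1) ∈ Finset.Icc 1 (2 * k) := by
            simp only [Finset.mem_Icc]
            have := Nat.mod_lt n (show 0 < 2 * k + 1 by omega)
            omega
          rw [← Finset.add_sum_erase _ _ hr, if_pos rfl, zero_add]
          have hall : ∀ i ∈ (Finset.Icc 1 (2 * k)).erase (n % (2 * k + 1)),
              (if n % (2 * k + 1) = i then (0:ℕ) else 1) = 1 := by
            intro i hi
            have hne := Finset.ne_of_mem_erase hi
            rw [if_neg (fun hh => hne hh.symm)]
          rw [Finset.sum_congr rfl hall, Finset.sum_const, smul_eq_mul, mul_one,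
            Finset.card_erase_of_mem hr, Nat.card_Icc]
          omega
  intro n hn
  have hodd := key n
  rw [if_neg hn] at hodd
  apply padicValNat.eq_zero_of_not_dvd
  omega
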